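/- arXiv:2210.17266 — 2 statements merged into one kernel-verified Lean document; each statement's English description precedes it below -/
import Mathlib

section
/- Let q ∈ L¹(0,1), ρ ∈ ℂ nonzero, ω = ∫₀¹ q(t) dt, and Q(1,λ) = ∫₀¹ (sin ρ(1-t)/ρ) q(t) (sin ρt/ρ) dt. Define u⁺(x) = (q((1+x)/2) + q((1-x)/2))/4. Then Q(1,λ) = ∫₀¹ u⁺(x) (cos ρx / ρ²) dx - ω cos ρ / (2ρ²). -/
open MeasureTheory intervalIntegral

noncomputable def uplus (q : ℝ → ℂ) (x : ℝ) : ℂ := (q ((1 + x) / 2) + q ((1 - x) / 2)) / 4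

theorem stmt3 (q : ℝ → ℂ) (hq : IntervalIntegrable q volume 0 1)
    (ρ : ℂ) (hρ : ρ ≠ 0) :
    (∫ t in (0 : ℝ)..1, (Complex.sin (ρ * (1 - ↑t)) / ρ) * q t * (Complex.sin (ρ * ↑t) / ρ))
      = (∫ x in (0 : ℝ)..1, uplus q x * (Complex.cos (ρ * ↑x) / ρ ^ 2))
        - (∫ t in (0 : ℝ)..1, q t) * Complex.cos ρ / (2 * ρ ^ 2) := by
  -- continuity helper
  have hcos : ∀ c : ℂ, Continuous fun x : ℝ => Complex.cos (c * x + ρ * 0) := by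
    intro c; fun_prop
  have hcont : ∀ c d : ℂ, Continuous fun x : ℝ => Complex.cos (c + d * x) := by
    intro c d; fun_prop
  -- integrability of shifted q's
  have hq1 : IntervalIntegrable (fun x => q ((1 + x) / 2)) volume 0 1 := by
    have h1 := (hq.comp_add_right (1/2)).comp_mul_left (c := 1/2)
    norm_num at h1
    have h2 := h1.mono_set (show Set.uIcc (0:ℝ) 1 ⊆ Set.uIcc (-1) 1 from
      Set.uIcc_subset_uIcc (by norm_num [Set.mem_uIcc]) (by norm_num [Set.mem_uIcc]))
    convert h2 using 2 with x
    ring_nf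
  have hq2 : IntervalIntegrable (fun x => q ((1 - x) / 2)) volume 0 1 := by
    have h1 := (hq.comp_mul_left (c := 1/2)).comp_sub_left 1
    norm_num at h1
    have h2 := h1.symm.mono_set (show Set.uIcc (0:ℝ) 1 ⊆ Set.uIcc (-1) 1 from
      Set.uIcc_subset_uIcc (by norm_num [Set.mem_uIcc]) (by norm_num [Set.mem_uIcc]))
    convert h2 using 2 with x
    ring_nf
  set g : ℝ → ℂ := fun x => q ((1 + x) / 2) * Complex.cos (ρ * x) with hgdef
  set h : ℝ → ℂ := fun x => q ((1 - x) / 2) * Complex.cos (ρ * x) with hhdef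
  have hccos : Continuous fun x : ℝ => Complex.cos (ρ * x) := by fun_prop
  have hgint : IntervalIntegrable g volume 0 1 := hq1.mul_continuousOn hccos.continuousOn
  have hhint : IntervalIntegrable h volume 0 1 := hq2.mul_continuousOn hccos.continuousOn
  have hF : IntervalIntegrable (fun t : ℝ => q t * Complex.cos (ρ * (1 - 2 * t))) volume 0 1 :=
    hq.mul_continuousOn (Continuous.continuousOn (by fun_prop))
  -- pointwise product-to-sum identity
  have key : ∀ t : ℝ, (Complex.sin (ρ * (1 - ↑t)) / ρ) * q t * (Complex.sin (ρ * ↑t) / ρ)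
      = q t * Complex.cos (ρ * (1 - 2 * ↑t)) / (2 * ρ ^ 2)
        - q t * (Complex.cos ρ / (2 * ρ ^ 2)) := by
    intro t
    have hd : Complex.cos (ρ * (1 - 2 * ↑t)) - Complex.cos ρ
        = 2 * Complex.sin (ρ * (1 - ↑t)) * Complex.sin (ρ * ↑t) := by
      have h := Complex.cos_sub_cos (ρ * (1 - 2 * ↑t)) ρ
      rw [show (ρ * (1 - 2 * (t : ℂ)) + ρ) / 2 = ρ * (1 - (t : ℂ)) by ring,
        show (ρ * (1 - 2 * (t : ℂ)) - ρ) / 2 = -(ρ * (t : ℂ)) by ring, Complex.sin_neg] at h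
      linear_combination h
    calc Complex.sin (ρ * (1 - ↑t)) / ρ * q t * (Complex.sin (ρ * ↑t) / ρ)
        = q t * ((2 * Complex.sin (ρ * (1 - ↑t)) * Complex.sin (ρ * ↑t)) / (2 * ρ ^ 2)) := by
          field_simp
      _ = q t * ((Complex.cos (ρ * (1 - 2 * ↑t)) - Complex.cos ρ) / (2 * ρ ^ 2)) := by rw [hd]
      _ = _ := by ring
  simp only [key]
  rw [integral_sub (hF.div_const _) (hq.mul_const _), intervalIntegral.integral_div, intervalIntegral.integral_mul_const]
  -- split and substitute
  have sub1 : Set.uIcc (0:ℝ) (1/2) ⊆ Set.uIcc (0:ℝ) 1 :=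
    Set.uIcc_subset_uIcc (by norm_num [Set.mem_uIcc]) (by norm_num [Set.mem_uIcc])
  have sub2 : Set.uIcc ((1:ℝ)/2) 1 ⊆ Set.uIcc (0:ℝ) 1 :=
    Set.uIcc_subset_uIcc (by norm_num [Set.mem_uIcc]) (by norm_num [Set.mem_uIcc])
  have split : (∫ t in (0:ℝ)..1, q t * Complex.cos (ρ * (1 - 2 * ↑t)))
      = (∫ t in (0:ℝ)..(1/2), q t * Complex.cos (ρ * (1 - 2 * ↑t)))
        + ∫ t in ((1:ℝ)/2)..1, q t * Complex.cos (ρ * (1 - 2 * ↑t)) :=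
    (integral_add_adjacent_intervals (hF.mono_set sub1) (hF.mono_set sub2)).symm
  have subst1 : (∫ t in (0:ℝ)..(1/2), q t * Complex.cos (ρ * (1 - 2 * ↑t)))
      = (1/2 : ℂ) * ∫ x in (0:ℝ)..1, h x := by
    have e : ∀ t : ℝ, q t * Complex.cos (ρ * (1 - 2 * ↑t)) = h ((-2) * t + 1) := by
      intro t
      have a1 : (1 - (-2 * t + 1)) / 2 = t := by ring
      have a2 : ρ * (1 - 2 * (t : ℂ)) = ρ * ((-2 * t + 1 : ℝ) : ℂ) := by push_cast; ring
      simp only [hhdef, a1, a2]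
    rw [integral_congr (fun t _ => e t),
      integral_comp_mul_add h (by norm_num : (-2:ℝ) ≠ 0) 1]
    norm_num
    rw [integral_symm]
    simp [Complex.real_smul]
  have subst2 : (∫ t in ((1:ℝ)/2)..1, q t * Complex.cos (ρ * (1 - 2 * ↑t)))
      = (1/2 : ℂ) * ∫ x in (0:ℝ)..1, g x := by
    have e : ∀ t : ℝ, q t * Complex.cos (ρ * (1 - 2 * ↑t)) = g (2 * t + (-1)) := by
      intro t
      have a1 : (1 + (2 * t + -1)) / 2 = t := by ring
      have a2 : ρ * (1 - 2 * (t : ℂ)) = -(ρ * ((2 * t + -1 : ℝ) : ℂ)) := by push_cast; ring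
      simp only [hgdef, a1, a2, Complex.cos_neg]
    rw [integral_congr (fun t _ => e t),
      integral_comp_mul_add g (by norm_num : (2:ℝ) ≠ 0) (-1)]
    norm_num
  rw [split, subst1, subst2]
  -- rewrite the RHS integrand
  have rhs : ∀ x : ℝ, uplus q x * (Complex.cos (ρ * ↑x) / ρ ^ 2) = (g x + h x) / (4 * ρ ^ 2) := by
    intro x
    simp only [uplus, hgdef, hhdef]
    field_simp
  simp only [rhs]
  rw [intervalIntegral.integral_div, integral_add hgint hhint]
  have hne : (2:ℂ) * (2 * ρ ^ 2) * (2 * ρ ^ 2) ≠ 0 :=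
    mul_ne_zero (mul_ne_zero two_ne_zero (mul_ne_zero two_ne_zero (pow_ne_zero 2 hρ)))
      (mul_ne_zero two_ne_zero (pow_ne_zero 2 hρ))
  field_simp
  ring
end

section
/- Let q₂, q₃ ∈ L²(0,1) and for k = 1,2 define w_k(x) = (1/2)(u_{k+1}⁺ + u_{4-k}⁻)(1-x) for x ∈ (0,1) and w_k(x) = (1/2)(u_{k+1}⁺ - u_{4-k}⁻)(x-1) for x ∈ (1,2), where u_j^±(x) = (q_j((1+x)/2) ± q_j((1-x)/2))/4. Then a.e. on (0,1): q₂(x) = 2(w₁-w₂)(2x) + 2(w₁+w₂)(2-2x) and q₃(x) = 2(w₂-w₁)(2x) + 2(w₁+w₂)(2-2x). Consequently, the map (q₂,q₃) ↦ (w₁,w₂) from L²(0,1)² to L²(0,2)² is injective. -/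
open MeasureTheory

noncomputable def uminus (q : ℝ → ℂ) (x : ℝ) : ℂ := (q ((1 + x) / 2) - q ((1 - x) / 2)) / 4

/-- `w₁` built from the potentials `q₂, q₃` (Lemma 2). -/
noncomputable def w1 (q₂ q₃ : ℝ → ℂ) (x : ℝ) : ℂ :=
  if x < 1 then (uplus q₂ (1 - x) + uminus q₃ (1 - x)) / 2
  else (uplus q₂ (x - 1) - uminus q₃ (x - 1)) / 2

/-- `w₂` built from the potentials `q₂, q₃` (Lemma 2). -/
noncomputable def w2 (q₂ q₃ : ℝ → ℂ) (x : ℝ) : ℂ :=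
  if x < 1 then (uplus q₃ (1 - x) + uminus q₂ (1 - x)) / 2
  else (uplus q₃ (x - 1) - uminus q₂ (x - 1)) / 2

/-- The key pointwise reconstruction identity: it holds for every real `x`. -/
lemma stmt18_key (q₂ q₃ : ℝ → ℂ) (x : ℝ) :
    q₂ x = 2 * (w1 q₂ q₃ (2 * x) - w2 q₂ q₃ (2 * x))
        + 2 * (w1 q₂ q₃ (2 - 2 * x) + w2 q₂ q₃ (2 - 2 * x)) ∧
    q₃ x = 2 * (w2 q₂ q₃ (2 * x) - w1 q₂ q₃ (2 * x))
        + 2 * (w1 q₂ q₃ (2 - 2 * x) + w2 q₂ q₃ (2 - 2 * x)) := by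
  have e1 : (1 + (1 - 2*x)) / 2 = 1 - x := by ring
  have e2 : (1 - (1 - 2*x)) / 2 = x := by ring
  have e3 : (1 + (2 - 2*x - 1)) / 2 = 1 - x := by ring
  have e4 : (1 - (2 - 2*x - 1)) / 2 = x := by ring
  have e5 : (1 + (2*x - 1)) / 2 = x := by ring
  have e6 : (1 - (2*x - 1)) / 2 = 1 - x := by ring
  have e7 : (1 + (1 - (2 - 2*x))) / 2 = x := by ring
  have e8 : (1 - (1 - (2 - 2*x))) / 2 = 1 - x := by ring
  rcases lt_or_ge (2*x) 1 with h | h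
  · have h2 : ¬ (2 - 2*x < 1) := by linarith
    simp only [w1, w2, uplus, uminus, if_pos h, if_neg h2, e1, e2, e3, e4]
    constructor <;> ring
  · have h1 : ¬ (2*x < 1) := by linarith
    rcases lt_or_ge (2 - 2*x) 1 with h2 | h2
    · simp only [w1, w2, uplus, uminus, if_neg h1, if_pos h2, e5, e6, e7, e8]
      constructor <;> ring
    · have hx : x = 1/2 := by linarith
      subst hx
      norm_num [w1, w2, uplus, uminus]
      constructor <;> ring

/-- Preimages of null sets under nondegenerate affine maps are null. -/
lemma stmt18_pre_affine (a b : ℝ) (ha : a ≠ 0) {S : Set ℝ} (hS : volume S = 0) :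
    volume ((fun x => a * x + b) ⁻¹' S) = 0 := by
  have h : (fun x : ℝ => a * x + b) ⁻¹' S = (a * ·) ⁻¹' ((· + b) ⁻¹' S) := rfl
  rw [h, Real.volume_preimage_mul_left ha, measure_preimage_add_right volume b S, hS, mul_zero]

theorem stmt18 :
    (∀ q₂ q₃ : ℝ → ℂ,
      MemLp q₂ 2 (volume.restrict (Set.Ioo (0 : ℝ) 1)) →
      MemLp q₃ 2 (volume.restrict (Set.Ioo (0 : ℝ) 1)) →
      ∀ᵐ x ∂volume, x ∈ Set.Ioo (0 : ℝ) 1 →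
        (q₂ x = 2 * (w1 q₂ q₃ (2 * x) - w2 q₂ q₃ (2 * x))
            + 2 * (w1 q₂ q₃ (2 - 2 * x) + w2 q₂ q₃ (2 - 2 * x)) ∧
         q₃ x = 2 * (w2 q₂ q₃ (2 * x) - w1 q₂ q₃ (2 * x))
            + 2 * (w1 q₂ q₃ (2 - 2 * x) + w2 q₂ q₃ (2 - 2 * x)))) ∧
    (∀ q₂ q₃ r₂ r₃ : ℝ → ℂ,
      MemLp q₂ 2 (volume.restrict (Set.Ioo (0 : ℝ) 1)) →
      MemLp q₃ 2 (volume.restrict (Set.Ioo (0 : ℝ) 1)) →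
      MemLp r₂ 2 (volume.restrict (Set.Ioo (0 : ℝ) 1)) →
      MemLp r₃ 2 (volume.restrict (Set.Ioo (0 : ℝ) 1)) →
      w1 q₂ q₃ =ᵐ[volume.restrict (Set.Ioo (0 : ℝ) 2)] w1 r₂ r₃ →
      w2 q₂ q₃ =ᵐ[volume.restrict (Set.Ioo (0 : ℝ) 2)] w2 r₂ r₃ →
      q₂ =ᵐ[volume.restrict (Set.Ioo (0 : ℝ) 1)] r₂ ∧
      q₃ =ᵐ[volume.restrict (Set.Ioo (0 : ℝ) 1)] r₃) := by
  constructor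
  · intro q₂ q₃ _ _
    filter_upwards with x _
    exact stmt18_key q₂ q₃ x
  · intro q₂ q₃ r₂ r₃ _ _ _ _ h1 h2
    have h1' : ∀ᵐ y ∂volume, y ∈ Set.Ioo (0:ℝ) 2 → w1 q₂ q₃ y = w1 r₂ r₃ y :=
      (ae_restrict_iff' measurableSet_Ioo).mp h1
    have h2' : ∀ᵐ y ∂volume, y ∈ Set.Ioo (0:ℝ) 2 → w2 q₂ q₃ y = w2 r₂ r₃ y :=
      (ae_restrict_iff' measurableSet_Ioo).mp h2
    set P : ℝ → Prop := fun y =>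
      y ∈ Set.Ioo (0:ℝ) 2 → (w1 q₂ q₃ y = w1 r₂ r₃ y ∧ w2 q₂ q₃ y = w2 r₂ r₃ y) with hP
    have hPae : ∀ᵐ y ∂volume, P y := by
      filter_upwards [h1', h2'] with y hy1 hy2 hy
      exact ⟨hy1 hy, hy2 hy⟩
    have hS : volume {y | ¬ P y} = 0 := hPae
    have p1 : volume ((fun x : ℝ => 2 * x + 0) ⁻¹' {y | ¬ P y}) = 0 :=
      stmt18_pre_affine 2 0 two_ne_zero hS
    have p2 : volume ((fun x : ℝ => (-2) * x + 2) ⁻¹' {y | ¬ P y}) = 0 :=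
      stmt18_pre_affine (-2) 2 (by norm_num) hS
    have a1 : ∀ᵐ x ∂volume, P (2 * x + 0) := p1
    have a2 : ∀ᵐ x ∂volume, P ((-2) * x + 2) := p2
    have main : ∀ᵐ x ∂volume, x ∈ Set.Ioo (0:ℝ) 1 → (q₂ x = r₂ x ∧ q₃ x = r₃ x) := by
      filter_upwards [a1, a2] with x hx1 hx2 hx
      obtain ⟨hx0, hx1'⟩ := hx
      have m1 : (2 : ℝ) * x + 0 ∈ Set.Ioo (0:ℝ) 2 := by constructor <;> [linarith; linarith]
      have m2 : (-2 : ℝ) * x + 2 ∈ Set.Ioo (0:ℝ) 2 := by constructor <;> [linarith; linarith]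
      obtain ⟨e1, e2⟩ := hx1 m1
      obtain ⟨e3, e4⟩ := hx2 m2
      have ha : (2:ℝ) * x + 0 = 2 * x := by ring
      have hb : (-2:ℝ) * x + 2 = 2 - 2 * x := by ring
      rw [ha] at e1 e2; rw [hb] at e3 e4
      obtain ⟨k1, k2⟩ := stmt18_key q₂ q₃ x
      obtain ⟨k1', k2'⟩ := stmt18_key r₂ r₃ x
      constructor
      · rw [k1, k1', e1, e2, e3, e4]
      · rw [k2, k2', e1, e2, e3, e4]
    constructor
    · exact (ae_restrict_iff' measurableSet_Ioo).mpr (main.mono fun x h hx => (h hx).1)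
    · exact (ae_restrict_iff' measurableSet_Ioo).mpr (main.mono fun x h hx => (h hx).2)
end
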